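/- Let f(x) = a_{n_r}x^{n_r} + ... + a_{n_1}x^{n_1} + εp^u where p is prime, u ≥ 2, ε = ±1, n_1 = 1, p does not divide a_{n_1}a_{n_r}, all a_{n_i} are nonzero, and p^u > |a_{n_1}| + ... + |a_{n_r}|. Then f is irreducible over Z. -/

import Mathlib

open Polynomial

private lemma multiset_prod_gt (s : Multiset ℝ) (hs : s ≠ 0) (h : ∀ x ∈ s, 1 < x) :
    1 < s.prod := by
  induction s using Multiset.induction with
  | empty => simp at hs
  | cons a t _ =>
    rw [Multiset.prod_cons]
    have ha : 1 < a := h a (Multiset.mem_cons_self a t)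
    have ht : 1 ≤ t.prod :=
      Multiset.one_le_prod (fun x hx => le_of_lt (h x (Multiset.mem_cons_of_mem hx)))
    nlinarith

private lemma nat_prime_dvd_of_big (p u m : ℕ) (hp : p.Prime) (hm : 1 < m) (hd : m ∣ p ^ u) :
    p ∣ m := by
  obtain ⟨k, _, rfl⟩ := (Nat.dvd_prime_pow hp).mp hd
  rcases k with _ | k
  · simp at hm
  · exact dvd_pow_self p (Nat.succ_ne_zero k)

private lemma coeff0_big (f g : ℤ[X]) (hf0 : f ≠ 0) (hg : g ∣ f) (hgd : 1 ≤ g.natDegree)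
    (hroots : ∀ z : ℂ, (f.map (Int.castRingHom ℂ)).IsRoot z → 1 < ‖z‖) :
    1 < (g.coeff 0).natAbs := by
  have hg0 : g ≠ 0 := by rintro rfl; simp at hgd
  set φ := Int.castRingHom ℂ
  have hφ : Function.Injective (φ : ℤ →+* ℂ) := fun x y hxy => by simpa using hxy
  set G := g.map φ with hG
  have hG0 : G ≠ 0 := (Polynomial.map_ne_zero_iff hφ).mpr hg0
  have hGd : G.natDegree = g.natDegree := natDegree_map_eq_of_injective hφ g
  have hsplit : Splits G := IsAlgClosed.splits G
  have hcard : Multiset.card G.roots = g.natDegree := by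
    rw [← hGd]; exact (splits_iff_card_roots).mp hsplit
  have hfac := hsplit.eq_prod_roots
  -- every root of G has abs > 1
  have hroot : ∀ z ∈ G.roots, 1 < ‖z‖ := by
    intro z hz
    have hzr : G.IsRoot z := ((mem_roots hG0).mp hz)
    obtain ⟨q, hq⟩ := hg
    apply hroots z
    have : f.map φ = G * q.map φ := by rw [hq, Polynomial.map_mul]
    simp [IsRoot, this, hzr.eq_zero]
  -- evaluate at 0
  have heval : ‖G.eval 0‖ =
      ‖G.leadingCoeff‖ * ((G.roots.map (fun z => ‖z‖)).prod) := by
    conv_lhs => rw [hfac]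
    rw [eval_mul, eval_C, eval_multiset_prod, Multiset.map_map, norm_mul,
      show ∀ s : Multiset ℂ, ‖s.prod‖ = (s.map (‖·‖)).prod from
        fun s => map_multiset_prod (normHom : ℂ →*₀ ℝ) s, Multiset.map_map]
    congr 1
    congr 1
    apply Multiset.map_congr rfl
    intro z _
    simp
  have hlead : 1 ≤ ‖G.leadingCoeff‖ := by
    have : G.leadingCoeff = (g.leadingCoeff : ℂ) := by
      rw [hG, leadingCoeff, coeff_map, hGd]; rfl
    rw [this, Complex.norm_intCast]
    have : g.leadingCoeff ≠ 0 := leadingCoeff_ne_zero.mpr hg0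
    exact_mod_cast Int.one_le_abs (by exact_mod_cast this)
  have hprod : 1 < (G.roots.map (fun z => ‖z‖)).prod := by
    apply multiset_prod_gt
    · intro h0
      rw [Multiset.map_eq_zero] at h0
      rw [h0] at hcard
      simp at hcard
      omega
    · intro x hx
      obtain ⟨z, hz, rfl⟩ := Multiset.mem_map.mp hx
      exact hroot z hz
  have hGev : G.eval 0 = ((g.coeff 0 : ℤ) : ℂ) := by
    rw [← coeff_zero_eq_eval_zero, hG, coeff_map]; rfl
  have : 1 < ‖((g.coeff 0 : ℤ) : ℂ)‖ := by
    rw [← hGev, heval]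
    nlinarith [norm_nonneg (G.leadingCoeff)]
  rw [Complex.norm_intCast] at this
  have h1 : (1 : ℝ) < |(g.coeff 0 : ℝ)| := by exact_mod_cast this
  have h2 : (1 : ℤ) < |g.coeff 0| := by
    rw [← Int.cast_abs] at h1; exact_mod_cast h1
  rw [Int.abs_eq_natAbs] at h2
  exact_mod_cast h2

theorem stmt_7 (p u : ℕ) (hp : p.Prime) (hu : 2 ≤ u) (ε : ℤ) (hε : ε = 1 ∨ ε = -1)
    (r : ℕ) (n : Fin (r + 1) → ℕ) (a : Fin (r + 1) → ℤ)
    (hmono : StrictMono n) (hn1 : n 0 = 1)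
    (hpa : ¬ (p : ℤ) ∣ a 0 * a (Fin.last r))
    (ha : ∀ i, a i ≠ 0)
    (hdom : ((p : ℤ)) ^ u > ∑ i, |a i|)
    (f : ℤ[X]) (hf : f = C (ε * (p : ℤ) ^ u) + ∑ i, C (a i) * X ^ (n i)) :
    Irreducible f := by
  have hppos : (0:ℤ) < (p:ℤ)^u := pow_pos (by exact_mod_cast hp.pos) u
  have hεabs : |ε| = 1 := by rcases hε with rfl | rfl <;> simp
  have hn_ge : ∀ i, 1 ≤ n i := fun i => hn1 ▸ hmono.monotone (Fin.zero_le i)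
  -- coefficient computations
  have hc0 : f.coeff 0 = ε * (p:ℤ)^u := by
    rw [hf, coeff_add, coeff_C, finset_sum_coeff]
    simp only [coeff_C_mul, coeff_X_pow]
    rw [Finset.sum_eq_zero]
    · simp
    · intro i _
      have := hn_ge i
      rw [if_neg (by omega)]
      ring
  have hc1 : f.coeff 1 = a 0 := by
    rw [hf, coeff_add, coeff_C, finset_sum_coeff]
    simp only [coeff_C_mul, coeff_X_pow]
    rw [Finset.sum_eq_single 0]
    · simp [hn1]
    · intro i _ hi
      rw [if_neg, mul_zero]
      intro hni
      apply hi
      apply hmono.injective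
      rw [hn1]
      omega
    · intro h; exact absurd (Finset.mem_univ 0) h
  have hf0 : f ≠ 0 := fun h => ha 0 (by rw [← hc1, h, coeff_zero])
  -- root bound
  have hroots : ∀ z : ℂ, (f.map (Int.castRingHom ℂ)).IsRoot z → 1 < ‖z‖ := by
    intro z hz
    by_contra hle
    push_neg at hle
    have hev : (0:ℂ) = (ε:ℂ) * (p:ℂ)^u + ∑ i, (a i : ℂ) * z ^ (n i) := by
      rw [← hz.eq_zero, hf, eval_map, eval₂_add, eval₂_C, eval₂_finset_sum]
      simp only [eval₂_mul, eval₂_C, eval₂_X_pow]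
      simp only [eq_intCast]
      push_cast
      ring
    have key : ((p:ℝ))^u ≤ ∑ i, |(a i : ℝ)| := by
      have h1 : (ε:ℂ) * (p:ℂ)^u = - ∑ i, (a i : ℂ) * z ^ (n i) := by
        linear_combination -hev
      have h2 : ‖(ε:ℂ) * (p:ℂ)^u‖ = (p:ℝ)^u := by
        rw [norm_mul, norm_pow]
        have : ‖(ε:ℂ)‖ = 1 := by
          rcases hε with rfl | rfl <;> simp
        rw [this]; simp [Complex.norm_natCast]
      calc ((p:ℝ))^u = ‖(ε:ℂ) * (p:ℂ)^u‖ := h2.symm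
        _ = ‖∑ i, (a i : ℂ) * z ^ (n i)‖ := by rw [h1, norm_neg]
        _ ≤ ∑ i, ‖(a i : ℂ) * z ^ (n i)‖ := norm_sum_le _ _
        _ ≤ ∑ i, |(a i : ℝ)| := by
              apply Finset.sum_le_sum
              intro i _
              rw [norm_mul, norm_pow]
              have : ‖(a i : ℂ)‖ = |(a i : ℝ)| := by
                rw [show ((a i:ℂ)) = ((a i:ℤ):ℂ) from rfl, Complex.norm_intCast]
                try norm_cast
              rw [this]
              have hz1 : ‖z‖ ^ (n i) ≤ 1 :=
                pow_le_one₀ (norm_nonneg z) hle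
              nlinarith [abs_nonneg ((a i : ℝ))]
    have hdom' : ∑ i, |(a i : ℝ)| < ((p:ℝ))^u := by
      have h2 : ((∑ i, |a i| : ℤ):ℝ) < ((p:ℝ))^u := by exact_mod_cast hdom
      push_cast at h2
      exact h2
    linarith
  -- final p-divisibility endgame helper
  have pZ : Prime ((p:ℤ)) := Nat.prime_iff_prime_int.mp hp
  have hdvd_p : ∀ c : ℤ, c ∣ ε * (p:ℤ)^u → 1 < c.natAbs → (p:ℤ) ∣ c := by
    intro c hc hc1'
    have hcu : c ∣ (p:ℤ)^u := by
      rcases hε with rfl | rfl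
      · simpa using hc
      · exact (dvd_neg.mp (by simpa using hc))
    have : c.natAbs ∣ p ^ u := by
      have := Int.natAbs_dvd_natAbs.mpr hcu
      simpa [Int.natAbs_pow] using this
    have := nat_prime_dvd_of_big p u c.natAbs hp hc1' this
    exact dvd_trans (Int.natCast_dvd_natCast.mpr this) (Int.natAbs_dvd.mpr dvd_rfl)
  have hnpa0 : ¬ (p:ℤ) ∣ a 0 := fun h => hpa (h.mul_right _)
  constructor
  · -- not a unit
    intro hunit
    rw [Polynomial.isUnit_iff] at hunit
    obtain ⟨c, _, hc⟩ := hunit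
    have : f.coeff 1 = 0 := by rw [← hc, coeff_C]; simp
    exact ha 0 (by rw [← hc1, this])
  · intro g h hgh
    by_contra hcon
    push_neg at hcon
    obtain ⟨hgu, hhu⟩ := hcon
    have hgne : g ≠ 0 := fun h0 => hf0 (by rw [hgh, h0, zero_mul])
    have hhne : h ≠ 0 := fun h0 => hf0 (by rw [hgh, h0, mul_zero])
    have hcoeff0 : g.coeff 0 * h.coeff 0 = ε * (p:ℤ)^u := by
      rw [← mul_coeff_zero, ← hgh, hc0]
    -- constant factor case
    have hconst : ∀ q w : ℤ[X], f = q * w → q.natDegree = 0 → ¬ IsUnit q → False := by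
      intro q w hqw hq0 hqu
      have hqC : q = C (q.coeff 0) := eq_C_of_natDegree_eq_zero hq0
      set c := q.coeff 0 with hc
      have hcdvd1 : c ∣ a 0 := by
        have : f.coeff 1 = c * w.coeff 1 := by
          rw [hqw, hqC]; rw [coeff_C_mul]
        exact ⟨w.coeff 1, by rw [← hc1, this]⟩
      have hcdvd0 : c ∣ ε * (p:ℤ)^u := by
        have : f.coeff 0 = c * w.coeff 0 := by rw [hqw, hqC, coeff_C_mul]
        exact ⟨w.coeff 0, by rw [← hc0, this]⟩
      have hcne : c ≠ 0 := by
        intro h0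
        apply hf0
        rw [hqw, hqC, h0]; simp
      have hcabs : 1 < c.natAbs := by
        rcases Nat.lt_or_ge 1 c.natAbs with h1 | h1
        · exact h1
        · exfalso
          apply hqu
          rw [hqC, Polynomial.isUnit_C]
          have hna : c.natAbs ≠ 0 := Int.natAbs_ne_zero.mpr hcne
          exact Int.isUnit_iff_natAbs_eq.mpr (by omega)
      exact hnpa0 ((hdvd_p c hcdvd0 hcabs).trans hcdvd1)
    rcases Nat.eq_zero_or_pos g.natDegree with hg0 | hgd
    · exact hconst g h hgh hg0 hgu
    rcases Nat.eq_zero_or_pos h.natDegree with hh0 | hhd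
    · exact hconst h g (by rw [hgh, mul_comm]) hh0 hhu
    -- both nonconstant
    have hgbig : 1 < (g.coeff 0).natAbs :=
      coeff0_big f g hf0 ⟨h, hgh⟩ hgd hroots
    have hhbig : 1 < (h.coeff 0).natAbs :=
      coeff0_big f h hf0 ⟨g, by rw [hgh, mul_comm]⟩ hhd hroots
    have hpg : (p:ℤ) ∣ g.coeff 0 := hdvd_p _ ⟨h.coeff 0, hcoeff0.symm⟩ hgbig
    have hph : (p:ℤ) ∣ h.coeff 0 := hdvd_p _ ⟨g.coeff 0, by rw [← hcoeff0]; ring⟩ hhbig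
    have hc1' : a 0 = g.coeff 0 * h.coeff 1 + g.coeff 1 * h.coeff 0 := by
      rw [← hc1, hgh, coeff_mul, Finset.Nat.sum_antidiagonal_eq_sum_range_succ_mk]
      simp [Finset.sum_range_succ]
    apply hnpa0
    rw [hc1']
    exact dvd_add (hpg.mul_right _) (hph.mul_left _)
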